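/- The anti-normal matrix elements satisfy ⟨r| a^n (a†)^m |s⟩ = q^{−C(n,2)/2 − C(m,2)/2 − (rn+sm)/2} · √(γ^{n+m}(q^{1+r};q)_n (q^{1+s};q)_m) · δ_{r+n, s+m}, where C(k,2) = k(k−1)/2 and a, a† act as a|n⟩ = √φ(n)|n−1⟩, a†|n⟩ = √φ(n+1)|n+1⟩. -/

import Mathlib

/-- Annihilation operator: `(a f) n = √φ(n+1) f (n+1)`, i.e. `a|n⟩ = √φ(n)|n-1⟩`. -/
noncomputable def aOp (φ : ℕ → ℝ) : Module.End ℂ (ℕ → ℂ) where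
  toFun f := fun n => (Real.sqrt (φ (n + 1)) : ℂ) * f (n + 1)
  map_add' f g := by funext n; simp [mul_add]
  map_smul' c f := by funext n; simp [smul_eq_mul]; ring

/-- Creation operator: `a†|n⟩ = √φ(n+1)|n+1⟩`. -/
noncomputable def adOp (φ : ℕ → ℝ) : Module.End ℂ (ℕ → ℂ) where
  toFun f := fun n => if n = 0 then 0 else (Real.sqrt (φ n) : ℂ) * f (n - 1)
  map_add' f g := by
    funext n; by_cases h : n = 0 <;> simp [h, mul_add]
  map_smul' c f := by
    funext n; by_cases h : n = 0 <;> simp [h, smul_eq_mul] <;> ring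

/-- Shifted q-factorial `(x;q)_k`. -/
def pq (q x : ℝ) (k : ℕ) : ℝ := ∏ j ∈ Finset.range k, (1 - x * q ^ j)

lemma adpow (φ : ℕ → ℝ) (m s : ℕ) :
    ((adOp φ ^ m) (Pi.single s 1) : ℕ → ℂ) =
      fun k => if k = s + m then ((∏ i ∈ Finset.range m, Real.sqrt (φ (s + 1 + i)) : ℝ) : ℂ)
        else 0 := by
  induction m with
  | zero => funext k; simp [Pi.single_apply]
  | succ m ih =>
    rw [pow_succ']
    rw [Module.End.mul_apply, ih]
    funext k
    show (if k = 0 then 0 else (Real.sqrt (φ k) : ℂ) * _) = _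
    rcases Nat.eq_zero_or_pos k with hk | hk
    · simp [hk]
    · have hk0 : k ≠ 0 := hk.ne'
      simp only [hk0, if_false]
      by_cases h : k = s + (m + 1)
      · have : k - 1 = s + m := by omega
        simp [this, h, Finset.prod_range_succ]
        rw [show s + 1 + m = s + (m+1) by ring, ← h]
        ring
      · have : k - 1 ≠ s + m := by omega
        simp [this, h]

lemma apow (φ : ℕ → ℝ) (n : ℕ) : ∀ (f : ℕ → ℂ) (r : ℕ),
    ((aOp φ ^ n) f) r = ((∏ j ∈ Finset.range n, Real.sqrt (φ (r + 1 + j)) : ℝ) : ℂ) * f (r + n) := by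
  induction n with
  | zero => intro f r; simp
  | succ n ih =>
    intro f r
    rw [pow_succ, Module.End.mul_apply, ih]
    show _ * ((Real.sqrt (φ (r + n + 1)) : ℂ) * f (r + n + 1)) = _
    rw [Finset.prod_range_succ]
    push_cast
    rw [show r + 1 + n = r + n + 1 by ring, show r + (n+1) = r + n + 1 by ring]
    ring

lemma sqrt_prod' (g : ℕ → ℝ) (hg : ∀ j, 0 ≤ g j) (n : ℕ) :
    ∏ j ∈ Finset.range n, Real.sqrt (g j) = Real.sqrt (∏ j ∈ Finset.range n, g j) := by
  induction n with
  | zero => simp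
  | succ n ih =>
    rw [Finset.prod_range_succ, Finset.prod_range_succ, ih,
      Real.sqrt_mul (Finset.prod_nonneg fun j _ => hg j)]

lemma cast_mul_pred (n : ℕ) : ((n * (n - 1) : ℕ) : ℝ) = (n : ℝ) * ((n : ℝ) - 1) := by
  cases n with
  | zero => simp
  | succ k => push_cast [Nat.succ_sub_one]; ring

section
variable (l lam q : ℝ) (hl : l ≠ 0) (hq0 : 0 < q) (hq1 : q < 1)
    (φ : ℕ → ℝ)
    (hφ : ∀ j : ℕ, φ j = l ^ 2 * q ^ lam * (1 - q ^ (-(j : ℝ))) / (q - 1))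
    (γ : ℝ) (hγ : γ = l ^ 2 * q ^ (lam - 1) / (1 - q))

include hq0 hq1 hφ hγ in
lemma phi_eq (j : ℕ) : φ j = γ * q ^ ((1 : ℝ) - j) * (1 - q ^ j) := by
  rw [hφ, hγ]
  have hqne : q ≠ 0 := hq0.ne'
  have h3 : q - 1 ≠ 0 := by linarith
  have h4 : (1 : ℝ) - q ≠ 0 := by linarith
  rw [Real.rpow_sub hq0, Real.rpow_sub hq0, Real.rpow_neg hq0.le, Real.rpow_natCast,
    Real.rpow_one]
  have h1 : (0:ℝ) < q ^ j := pow_pos hq0 j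
  have h2 : (0:ℝ) < q ^ lam := Real.rpow_pos_of_pos hq0 lam
  field_simp
  ring

include hq0 hq1 hγ in
lemma gamma_nonneg : 0 ≤ γ := by
  rw [hγ]
  have h2 : (0:ℝ) < 1 - q := by linarith
  have := Real.rpow_pos_of_pos hq0 (lam - 1)
  positivity

include hq0 hq1 hφ hγ in
lemma phi_nonneg (j : ℕ) : 0 ≤ φ j := by
  rw [phi_eq l lam q hq0 hq1 φ hφ γ hγ]
  have h1 : (0:ℝ) < q ^ ((1:ℝ) - j) := Real.rpow_pos_of_pos hq0 _
  have h2 : q ^ j ≤ 1 := pow_le_one₀ hq0.le hq1.le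
  have h0 := gamma_nonneg l lam q hq0 hq1 γ hγ
  exact mul_nonneg (mul_nonneg h0 h1.le) (by linarith)

lemma pq_nonneg (t n : ℕ) (hq0 : 0 < q) (hq1 : q < 1) :
    0 ≤ pq q (q ^ (t + 1)) n := by
  refine Finset.prod_nonneg fun j _ => ?_
  have : q ^ (t + 1) * q ^ j ≤ 1 := by
    rw [← pow_add]; exact pow_le_one₀ hq0.le hq1.le
  linarith

include hq0 hq1 hφ hγ in
lemma prod_phi (t n : ℕ) :
    ∏ j ∈ Finset.range n, φ (t + 1 + j) =
      γ ^ n * q ^ (-(t * n : ℝ) - n * (n - 1) / 2) * pq q (q ^ (t + 1)) n := by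
  induction n with
  | zero => simp [pq]
  | succ n ih =>
    rw [Finset.prod_range_succ, ih, phi_eq l lam q hq0 hq1 φ hφ γ hγ]
    have hpq : pq q (q ^ (t + 1)) (n + 1) = pq q (q ^ (t + 1)) n * (1 - q ^ (t + 1) * q ^ n) := by
      rw [pq, pq, Finset.prod_range_succ]
    rw [hpq]
    have e1 : ((1 : ℝ) - ((t:ℝ) + 1 + n)) = -(t : ℝ) - n := by ring
    have e2 : (-((t:ℝ) * ((n:ℝ) + 1)) - ((n:ℝ) + 1) * (((n:ℝ) + 1) - 1) / 2)
        = (-(t * n : ℝ) - n * (n - 1) / 2) + (-(t : ℝ) - n) := by ring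
    have e3 : (q : ℝ) ^ (t + 1 + n) = q ^ (t + 1) * q ^ n := by rw [← pow_add]
    push_cast
    rw [e1, e3, e2, Real.rpow_add hq0]
    ring

include hq0 hq1 hφ hγ in
lemma key_real (r s n m : ℕ) :
    (∏ j ∈ Finset.range n, Real.sqrt (φ (r + 1 + j))) *
      (∏ i ∈ Finset.range m, Real.sqrt (φ (s + 1 + i))) =
    q ^ (-((n * (n - 1) : ℕ) : ℝ) / 4 - ((m * (m - 1) : ℕ) : ℝ) / 4
        - ((r * n + s * m : ℕ) : ℝ) / 2) *
      Real.sqrt (γ ^ (n + m) * pq q (q ^ (r + 1)) n * pq q (q ^ (s + 1)) m) := by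
  set E : ℝ := -((n * (n - 1) : ℕ) : ℝ) / 4 - ((m * (m - 1) : ℕ) : ℝ) / 4
        - ((r * n + s * m : ℕ) : ℝ) / 2 with hE
  have hφn : ∀ j, 0 ≤ φ j := phi_nonneg l lam q hq0 hq1 φ hφ γ hγ
  rw [sqrt_prod' _ (fun j => hφn _) n, sqrt_prod' _ (fun j => hφn _) m,
    ← Real.sqrt_mul (Finset.prod_nonneg fun j _ => hφn _),
    prod_phi l lam q hq0 hq1 φ hφ γ hγ r n, prod_phi l lam q hq0 hq1 φ hφ γ hγ s m]
  have hγ0 : 0 ≤ γ := gamma_nonneg l lam q hq0 hq1 γ hγ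
  have hpq1 := pq_nonneg q r n hq0 hq1
  have hpq2 := pq_nonneg q s m hq0 hq1
  have hE2 : q ^ (-((r:ℝ) * n) - (n:ℝ) * ((n:ℝ) - 1) / 2) *
      q ^ (-((s:ℝ) * m) - (m:ℝ) * ((m:ℝ) - 1) / 2) = q ^ E * q ^ E := by
    rw [← Real.rpow_add hq0, ← Real.rpow_add hq0]
    congr 1
    rw [hE, cast_mul_pred n, cast_mul_pred m]
    push_cast
    ring
  have hmain : γ ^ n * q ^ (-((r:ℝ) * n) - (n:ℝ) * ((n:ℝ) - 1) / 2) * pq q (q ^ (r + 1)) n *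
      (γ ^ m * q ^ (-((s:ℝ) * m) - (m:ℝ) * ((m:ℝ) - 1) / 2) * pq q (q ^ (s + 1)) m) =
      (q ^ E * q ^ E) * (γ ^ (n + m) * pq q (q ^ (r + 1)) n * pq q (q ^ (s + 1)) m) := by
    rw [← hE2, pow_add]; ring
  rw [hmain, Real.sqrt_mul (by positivity),
    Real.sqrt_mul_self (Real.rpow_nonneg hq0.le E)]
end

theorem stmt12 (l lam q : ℝ) (hl : l ≠ 0) (hq0 : 0 < q) (hq1 : q < 1)
    (φ : ℕ → ℝ)
    (hφ : ∀ j : ℕ, φ j = l ^ 2 * q ^ lam * (1 - q ^ (-(j : ℝ))) / (q - 1))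
    (γ : ℝ) (hγ : γ = l ^ 2 * q ^ (lam - 1) / (1 - q)) :
    ∀ r s n m : ℕ,
      ((aOp φ ^ n * adOp φ ^ m) (Pi.single s 1)) r =
        if r + n = s + m then
          ((q ^ (-((n * (n - 1) : ℕ) : ℝ) / 4 - ((m * (m - 1) : ℕ) : ℝ) / 4
              - ((r * n + s * m : ℕ) : ℝ) / 2) *
            Real.sqrt (γ ^ (n + m) * pq q (q ^ (r + 1)) n * pq q (q ^ (s + 1)) m) : ℝ) : ℂ)
        else 0 := by
  intro r s n m
  rw [Module.End.mul_apply, adpow, apow]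
  by_cases h : r + n = s + m
  · rw [if_pos h, if_pos h, ← Complex.ofReal_mul]
    exact congrArg _ (key_real l lam q hq0 hq1 φ hφ γ hγ r s n m)
  · rw [if_neg h, if_neg h, mul_zero]
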